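/- Fix a positive parameter family Θ = (θ_{i,s}^o, θ_{i,s}^i)_{i∈N,s∈G}, and assume m_{rs} > 0 for all r, s ∈ G. Then the log-likelihood ℓ(Θ, Ω), viewed as a function of the positive parameters Ω = (ω_{rs})_{r,s∈G}, is uniquely maximized at ω̂_{rs} = m_{rs} / ( Σ_{i : g i = r} Σ_{j : g j = s} θ_{i,s}^o θ_{j,r}^i ) for each pair (r, s) ∈ G × G. -/

import Mathlib

/-- Number of edges from group `r` to group `s`. -/
def mEdges {N G : Type*} [Fintype N] [DecidableEq G] (g : N → G) (a : N → N → ℕ)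
    (r s : G) : ℕ :=
  ∑ i ∈ Finset.univ.filter (fun i => g i = r),
    ∑ j ∈ Finset.univ.filter (fun j => g j = s), a i j

/-- Poisson log-likelihood of the directed mixed-propensity model given the adjacency
matrix `a`. -/
noncomputable def loglik {N G : Type*} [Fintype N] (g : N → G) (a : N → N → ℕ)
    (θo θi : N → G → ℝ) (ω : G → G → ℝ) : ℝ :=
  ∑ i : N, ∑ j : N,
    ((a i j : ℝ) * Real.log (θo i (g j) * θi j (g i) * ω (g i) (g j))
      - θo i (g j) * θi j (g i) * ω (g i) (g j))

/-- Key single-variable fact: `m log x - T x ≤ m log(m/T) - T(m/T)`. -/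
lemma key_le (m T x : ℝ) (hm : 0 < m) (hT : 0 < T) (hx : 0 < x) :
    m * Real.log x - T * x ≤ m * Real.log (m / T) - T * (m / T) := by
  have h1 : 0 < x * T / m := by positivity
  have h := Real.log_le_sub_one_of_pos h1
  have hlog : Real.log (x * T / m) = Real.log x + Real.log T - Real.log m := by
    rw [Real.log_div (by positivity) (by positivity), Real.log_mul hx.ne' hT.ne']
  have hlog2 : Real.log (m / T) = Real.log m - Real.log T :=
    Real.log_div hm.ne' hT.ne'
  rw [hlog] at h
  have hTm : T * (m / T) = m := by field_simp
  rw [hlog2, hTm]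
  have h2 := mul_le_mul_of_nonneg_left h hm.le
  have h3 : m * (x * T / m) = T * x := by field_simp
  nlinarith [h2, h3]

lemma key_lt (m T x : ℝ) (hm : 0 < m) (hT : 0 < T) (hx : 0 < x) (hne : x ≠ m / T) :
    m * Real.log x - T * x < m * Real.log (m / T) - T * (m / T) := by
  have h1 : 0 < x * T / m := by positivity
  have hne1 : x * T / m ≠ 1 := by
    intro h
    apply hne
    field_simp at h ⊢
    linarith [h]
  have h := Real.log_lt_sub_one_of_pos h1 hne1
  have hlog : Real.log (x * T / m) = Real.log x + Real.log T - Real.log m := by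
    rw [Real.log_div (by positivity) (by positivity), Real.log_mul hx.ne' hT.ne']
  have hlog2 : Real.log (m / T) = Real.log m - Real.log T :=
    Real.log_div hm.ne' hT.ne'
  rw [hlog] at h
  have hTm : T * (m / T) = m := by field_simp
  rw [hlog2, hTm]
  have h2 := mul_lt_mul_of_pos_left h hm
  have h3 : m * (x * T / m) = T * x := by field_simp
  nlinarith [h2, h3]

/-- Decomposition of the log-likelihood into a constant plus groupwise terms. -/
lemma loglik_decomp {N G : Type*} [Fintype N] [Fintype G] [DecidableEq G]
    (g : N → G) (a : N → N → ℕ) (θo θi : N → G → ℝ)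
    (hθo : ∀ i s, 0 < θo i s) (hθi : ∀ i s, 0 < θi i s)
    (ω : G → G → ℝ) (hω : ∀ r s, 0 < ω r s) :
    loglik g a θo θi ω =
      (∑ i : N, ∑ j : N, (a i j : ℝ) * Real.log (θo i (g j) * θi j (g i)))
      + ∑ r : G, ∑ s : G,
        ((mEdges g a r s : ℝ) * Real.log (ω r s)
          - (∑ i ∈ Finset.univ.filter (fun i => g i = r),
              ∑ j ∈ Finset.univ.filter (fun j => g j = s), θo i s * θi j r) * ω r s) := by
  have step1 : loglik g a θo θi ω =
      (∑ i : N, ∑ j : N, (a i j : ℝ) * Real.log (θo i (g j) * θi j (g i)))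
      + ∑ i : N, ∑ j : N,
          ((a i j : ℝ) * Real.log (ω (g i) (g j))
            - θo i (g j) * θi j (g i) * ω (g i) (g j)) := by
    rw [loglik, ← Finset.sum_add_distrib]
    refine Finset.sum_congr rfl fun i _ => ?_
    rw [← Finset.sum_add_distrib]
    refine Finset.sum_congr rfl fun j _ => ?_
    rw [Real.log_mul (mul_pos (hθo _ _) (hθi _ _)).ne' (hω _ _).ne']
    ring
  rw [step1]
  congr 1
  have h2 : ∀ F : N → N → ℝ, (∑ i : N, ∑ j : N, F i j) =
      ∑ r : G, ∑ s : G,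
        ∑ i ∈ Finset.univ.filter (fun i => g i = r),
          ∑ j ∈ Finset.univ.filter (fun j => g j = s), F i j := by
    intro F
    rw [← Finset.sum_fiberwise Finset.univ g (fun i => ∑ j : N, F i j)]
    refine Finset.sum_congr rfl fun r _ => ?_
    rw [Finset.sum_comm]
    rw [← Finset.sum_fiberwise Finset.univ g
      (fun j => ∑ i ∈ Finset.univ.filter (fun i => g i = r), F i j)]
    refine Finset.sum_congr rfl fun s _ => ?_
    exact Finset.sum_comm
  rw [h2]
  refine Finset.sum_congr rfl fun r _ => Finset.sum_congr rfl fun s _ => ?_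
  rw [mEdges]
  push_cast
  simp only [Finset.sum_sub_distrib, Finset.sum_mul]
  congr 1
  · refine Finset.sum_congr rfl fun i hi => Finset.sum_congr rfl fun j hj => ?_
    simp only [Finset.mem_filter] at hi hj
    rw [hi.2, hj.2]
  · refine Finset.sum_congr rfl fun i hi => Finset.sum_congr rfl fun j hj => ?_
    simp only [Finset.mem_filter] at hi hj
    rw [hi.2, hj.2]

/-- for a fixed positive propensity family `Θ`, and provided
`m_{rs} > 0` for all `r, s`, the log-likelihood as a function of the positive parameters
`Ω` is uniquely maximized at
`ω̂_{rs} = m_{rs} / (∑_{i : g i = r} ∑_{j : g j = s} θ_{i,s}^o θ_{j,r}^i)`. -/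
theorem loglik_omega_unique_max
    {N G : Type*} [Fintype N] [Fintype G] [DecidableEq G]
    (g : N → G) (a : N → N → ℕ)
    (θo θi : N → G → ℝ)
    (hθo : ∀ i s, 0 < θo i s) (hθi : ∀ i s, 0 < θi i s)
    (hm : ∀ r s : G, 0 < mEdges g a r s) :
    (∀ ω : G → G → ℝ, (∀ r s, 0 < ω r s) →
      loglik g a θo θi ω ≤
        loglik g a θo θi
          (fun r s => (mEdges g a r s : ℝ) /
            (∑ i ∈ Finset.univ.filter (fun i => g i = r),
              ∑ j ∈ Finset.univ.filter (fun j => g j = s), θo i s * θi j r))) ∧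
    (∀ ω : G → G → ℝ, (∀ r s, 0 < ω r s) →
      loglik g a θo θi ω =
        loglik g a θo θi
          (fun r s => (mEdges g a r s : ℝ) /
            (∑ i ∈ Finset.univ.filter (fun i => g i = r),
              ∑ j ∈ Finset.univ.filter (fun j => g j = s), θo i s * θi j r)) →
      ω = fun r s => (mEdges g a r s : ℝ) /
        (∑ i ∈ Finset.univ.filter (fun i => g i = r),
          ∑ j ∈ Finset.univ.filter (fun j => g j = s), θo i s * θi j r)) := by
  set T : G → G → ℝ := fun r s =>
    ∑ i ∈ Finset.univ.filter (fun i => g i = r),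
      ∑ j ∈ Finset.univ.filter (fun j => g j = s), θo i s * θi j r with hT
  have hTpos : ∀ r s, 0 < T r s := by
    intro r s
    have hne : ∃ i, g i = r ∧ ∃ j, g j = s := by
      by_contra h
      push_neg at h
      have h0 : mEdges g a r s = 0 := by
        rw [mEdges]
        apply Finset.sum_eq_zero
        intro i hi
        simp only [Finset.mem_filter, Finset.mem_univ, true_and] at hi
        apply Finset.sum_eq_zero
        intro j hj
        simp only [Finset.mem_filter, Finset.mem_univ, true_and] at hj
        exact absurd hj (h i hi j)
      exact absurd h0 (hm r s).ne'
    obtain ⟨i, hi, j, hj⟩ := hne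
    rw [hT]
    apply Finset.sum_pos'
    · intro i' _
      apply Finset.sum_nonneg
      intro j' _
      exact (mul_pos (hθo _ _) (hθi _ _)).le
    · exact ⟨i, by simp [hi], Finset.sum_pos' (fun j' _ => (mul_pos (hθo _ _) (hθi _ _)).le)
        ⟨j, by simp [hj], mul_pos (hθo _ _) (hθi _ _)⟩⟩
  have hωhpos : ∀ r s, (0:ℝ) < (mEdges g a r s : ℝ) / T r s := fun r s => by
    have : (0:ℝ) < (mEdges g a r s : ℝ) := by exact_mod_cast hm r s
    exact div_pos this (hTpos r s)
  have hterm_le : ∀ ω : G → G → ℝ, (∀ r s, 0 < ω r s) → ∀ r s : G,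
      (mEdges g a r s : ℝ) * Real.log (ω r s) - T r s * ω r s ≤
      (mEdges g a r s : ℝ) * Real.log ((mEdges g a r s : ℝ) / T r s)
        - T r s * ((mEdges g a r s : ℝ) / T r s) := by
    intro ω hω r s
    have hmpos : (0:ℝ) < (mEdges g a r s : ℝ) := by exact_mod_cast hm r s
    exact key_le _ _ _ hmpos (hTpos r s) (hω r s)
  have hdec := fun (ω : G → G → ℝ) (hω : ∀ r s, 0 < ω r s) =>
    loglik_decomp g a θo θi hθo hθi ω hω
  constructor
  · intro ω hω
    rw [hdec ω hω, hdec _ hωhpos]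
    refine add_le_add (le_refl _) ?_
    apply Finset.sum_le_sum
    intro r _
    apply Finset.sum_le_sum
    intro s _
    exact hterm_le ω hω r s
  · intro ω hω heq
    rw [hdec ω hω, hdec _ hωhpos] at heq
    replace heq := add_left_cancel heq
    funext r s
    by_contra hne
    have hmpos : (0:ℝ) < (mEdges g a r s : ℝ) := by exact_mod_cast hm r s
    have hstrict : (mEdges g a r s : ℝ) * Real.log (ω r s) - T r s * ω r s <
        (mEdges g a r s : ℝ) * Real.log ((mEdges g a r s : ℝ) / T r s)
          - T r s * ((mEdges g a r s : ℝ) / T r s) :=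
      key_lt _ _ _ hmpos (hTpos r s) (hω r s) hne
    have hlt : (∑ r : G, ∑ s : G,
        ((mEdges g a r s : ℝ) * Real.log (ω r s) - T r s * ω r s)) <
        ∑ r : G, ∑ s : G,
        ((mEdges g a r s : ℝ) * Real.log ((mEdges g a r s : ℝ) / T r s)
          - T r s * ((mEdges g a r s : ℝ) / T r s)) := by
      apply Finset.sum_lt_sum
      · intro r' _
        apply Finset.sum_le_sum
        intro s' _
        exact hterm_le ω hω r' s'
      · refine ⟨r, Finset.mem_univ r, ?_⟩
        apply Finset.sum_lt_sum
        · intro s' _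
          exact hterm_le ω hω r s'
        · exact ⟨s, Finset.mem_univ s, hstrict⟩
    exact absurd heq hlt.ne
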